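/- Let Q^{(n,N)} be the n × N 0-1 matrix with N ≥ ⌊5n/2⌋ − 1 defined by: Q_{i,j}=1 iff (i ≤ ⌈n/2⌉ and i+j ≤ ⌈n/2⌉+1) or (i ≤ ⌈n/2⌉ and i+j > ⌈n/2⌉ + ⌊(⌈n/2⌉+N−1)/2⌋ + 1) or (i > ⌈n/2⌉ and ⌈n/2⌉ + N − ⌊(⌈n/2⌉+N−1)/2⌋ < i+j ≤ ⌈n/2⌉ + N). Then every homogeneous staircase in Q^{(n,N)} has length at most ⌈(⌈n/2⌉+N−1)/2⌉. -/

import Mathlib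

/-- A step of a staircase: the next position is strictly to the right in the
same row, or strictly below in the same column. -/
def Step {n N : ℕ} (p q : Fin n × Fin N) : Prop :=
  (p.1 = q.1 ∧ p.2 < q.2) ∨ (p.2 = q.2 ∧ p.1 < q.1)

/-- A `v`-staircase in the 0-1 matrix `M`: a sequence of positions all holding
the value `v`, each successive one strictly to the right in the same row or
strictly below in the same column of the previous one. -/
def IsStaircase {n N : ℕ} (M : Fin n → Fin N → Fin 2) (v : Fin 2)
    (L : List (Fin n × Fin N)) : Prop :=
  (∀ p ∈ L, M p.1 p.2 = v) ∧ L.Chain' Step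

/-- The matrix Q^(n,N) (1-based indices i, j): Q_(i,j) = 1 iff
(1) i ≤ ⌈n/2⌉ and i+j ≤ ⌈n/2⌉+1, or
(2) i ≤ ⌈n/2⌉ and i+j > ⌈n/2⌉ + ⌊(⌈n/2⌉+N−1)/2⌋ + 1, or
(3) i > ⌈n/2⌉ and ⌈n/2⌉ + N − ⌊(⌈n/2⌉+N−1)/2⌋ < i+j ≤ ⌈n/2⌉ + N. -/
def Qmat (n N : ℕ) : Fin n → Fin N → Fin 2 := fun i j =>
  if (i.1 + 1 ≤ (n + 1) / 2 ∧ (i.1 + 1) + (j.1 + 1) ≤ (n + 1) / 2 + 1) ∨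
     (i.1 + 1 ≤ (n + 1) / 2 ∧
       (n + 1) / 2 + ((n + 1) / 2 + N - 1) / 2 + 1 < (i.1 + 1) + (j.1 + 1)) ∨
     ((n + 1) / 2 < i.1 + 1 ∧
       (n + 1) / 2 + N - ((n + 1) / 2 + N - 1) / 2 < (i.1 + 1) + (j.1 + 1) ∧
       (i.1 + 1) + (j.1 + 1) ≤ (n + 1) / 2 + N)
  then 1 else 0

/-- If `f` is strictly increasing along `R`-steps between positions satisfying
`G`, and bounded by `B` on such positions, then any `R`-chain of `G`-positions
has length at most `B`. -/
lemma chain_len {P : Type} (G : P → Prop) (R : P → P → Prop) (f : P → ℕ) (B : ℕ)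
    (hf : ∀ p q, G p → G q → R p q → f p < f q) (hB : ∀ p, G p → f p < B) :
    ∀ L : List P, (∀ p ∈ L, G p) → L.Chain' R → L.length ≤ B := by
  have key : ∀ (L : List P) (a : P), G a → (∀ p ∈ L, G p) → List.Chain R a L →
      f a + L.length < B := by
    intro L
    induction L with
    | nil => intro a ha _ _; simpa using hB a ha
    | cons b l ih =>
      intro a ha hmem hch
      obtain ⟨hab, hch⟩ := List.isChain_cons_cons.mp hch
      focus
        have h1 := ih b (hmem b (by simp)) (fun p hp => hmem p (by simp [hp])) hch
        have h2 := hf a b ha (hmem b (by simp)) hab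
        simp only [List.length_cons]
        omega
  intro L hmem hch
  cases L with
  | nil => simp
  | cons a l =>
    have := key l a (hmem a (by simp)) (fun p hp => hmem p (by simp [hp])) hch
    simp only [List.length_cons]
    omega

lemma qmat_one {n N : ℕ} (i : Fin n) (j : Fin N) :
    Qmat n N i j = 1 ↔
    ((i.1 + 1 ≤ (n + 1) / 2 ∧ (i.1 + 1) + (j.1 + 1) ≤ (n + 1) / 2 + 1) ∨
     (i.1 + 1 ≤ (n + 1) / 2 ∧
       (n + 1) / 2 + ((n + 1) / 2 + N - 1) / 2 + 1 < (i.1 + 1) + (j.1 + 1)) ∨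
     ((n + 1) / 2 < i.1 + 1 ∧
       (n + 1) / 2 + N - ((n + 1) / 2 + N - 1) / 2 < (i.1 + 1) + (j.1 + 1) ∧
       (i.1 + 1) + (j.1 + 1) ≤ (n + 1) / 2 + N)) := by
  unfold Qmat
  split <;> rename_i h
  · exact ⟨fun _ => h, fun _ => rfl⟩
  · exact ⟨fun e => absurd e (by decide), fun e => absurd e h⟩

lemma qmat_zero {n N : ℕ} (i : Fin n) (j : Fin N) :
    Qmat n N i j = 0 ↔
    ¬((i.1 + 1 ≤ (n + 1) / 2 ∧ (i.1 + 1) + (j.1 + 1) ≤ (n + 1) / 2 + 1) ∨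
     (i.1 + 1 ≤ (n + 1) / 2 ∧
       (n + 1) / 2 + ((n + 1) / 2 + N - 1) / 2 + 1 < (i.1 + 1) + (j.1 + 1)) ∨
     ((n + 1) / 2 < i.1 + 1 ∧
       (n + 1) / 2 + N - ((n + 1) / 2 + N - 1) / 2 < (i.1 + 1) + (j.1 + 1) ∧
       (i.1 + 1) + (j.1 + 1) ≤ (n + 1) / 2 + N)) := by
  unfold Qmat
  split <;> rename_i h
  · exact ⟨fun e => absurd e (by decide), fun e => absurd h e⟩
  · exact ⟨fun _ => h, fun _ => rfl⟩

/-- For N ≥ ⌊5n/2⌋ − 1, every homogeneous staircase in Q^(n,N) has length at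
most ⌈(⌈n/2⌉+N−1)/2⌉. -/
theorem stmt7 (n N : ℕ) (hN : 5 * n / 2 - 1 ≤ N) :
    ∀ (v : Fin 2) (L : List (Fin n × Fin N)),
      IsStaircase (Qmat n N) v L → L.length ≤ ((n + 1) / 2 + N - 1 + 1) / 2 := by
  intro v L hL
  obtain ⟨hmem, hch⟩ := hL
  have hv : v = 0 ∨ v = 1 := by omega
  rcases hv with hv | hv <;> subst hv
  · -- 0-staircases
    refine chain_len (fun p : Fin n × Fin N => Qmat n N p.1 p.2 = 0) Step
      (fun p => if (p.1.1 + 1) + (p.2.1 + 1) ≤ (n + 1) / 2 + N then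
          (p.1.1 + 1) + (p.2.1 + 1) - ((n + 1) / 2 + 2)
        else
          (p.1.1 + 1) + (p.2.1 + 1) + ((n + 1) / 2 + N - 1 + 1) / 2 - (n + N + 1))
      (((n + 1) / 2 + N - 1 + 1) / 2) ?_ ?_ L hmem hch
    · intro p q hp hq hst
      rw [qmat_zero] at hp hq
      simp only [Step, Fin.ext_iff, Fin.lt_def] at hst
      have h1 := p.1.isLt; have h2 := p.2.isLt
      have h3 := q.1.isLt; have h4 := q.2.isLt
      split_ifs <;> omega
    · intro p hp
      rw [qmat_zero] at hp
      have h1 := p.1.isLt; have h2 := p.2.isLt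
      split_ifs <;> omega
  · -- 1-staircases
    refine chain_len (fun p : Fin n × Fin N => Qmat n N p.1 p.2 = 1) Step
      (fun p => if (p.1.1 + 1) + (p.2.1 + 1) ≤ (n + 1) / 2 + 1 then
          (p.1.1 + 1) + (p.2.1 + 1) - 2
        else
          (p.1.1 + 1) + (p.2.1 + 1) - (((n + 1) / 2 + N - 1) / 2 + 2))
      (((n + 1) / 2 + N - 1 + 1) / 2) ?_ ?_ L hmem hch
    · intro p q hp hq hst
      rw [qmat_one] at hp hq
      simp only [Step, Fin.ext_iff, Fin.lt_def] at hst
      have h1 := p.1.isLt; have h2 := p.2.isLt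
      have h3 := q.1.isLt; have h4 := q.2.isLt
      split_ifs <;> omega
    · intro p hp
      rw [qmat_one] at hp
      have h1 := p.1.isLt; have h2 := p.2.isLt
      split_ifs <;> omega
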